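/- Let V be a separable Hilbert space, and for ℓ = 0,…,L let D_ℓ := u_ℓ − u_{ℓ-1} ∈ L²(Ω;V) (with u_{-1} := 0) be level corrections. Let M₀ ≥ M₁ ≥ … ≥ M_L ≥ 0 =: M_{L+1} be sample numbers and build the bootstrap estimator E^L_{BS} := Σ_{ℓ=0}^L (1/M_ℓ) Σ_{i=1}^{M_ℓ} D_ℓ^{(i)} from i.i.d. copies (u_ℓ^{(i)})_ℓ that are independent across i but use the same sample i on all levels. Then E[E^L_{BS}] = E[u_L], and Var(E^L_{BS}) = Σ_{ℓ=0}^L (M_ℓ − M_{ℓ+1}) · Var( Σ_{k=0}^{ℓ} D_k / M_k ). -/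

import Mathlib

open MeasureTheory ProbabilityTheory
open scoped RealInnerProductSpace

section Aux

variable {Ω V : Type*} [MeasurableSpace Ω] {μ : Measure Ω} [IsProbabilityMeasure μ]
    [NormedAddCommGroup V] [InnerProductSpace ℝ V] [CompleteSpace V]
    [MeasurableSpace V] [BorelSpace V] [SecondCountableTopology V]

lemma aux_integrable_inner {X Y : Ω → V} (hX : MemLp X 2 μ) (hY : MemLp Y 2 μ) :
    Integrable (fun ω => ⟪X ω, Y ω⟫) μ := by
  have h := MeasureTheory.L2.integrable_inner (𝕜 := ℝ) (hX.toLp X) (hY.toLp Y)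
  refine h.congr ?_
  filter_upwards [hX.coeFn_toLp, hY.coeFn_toLp] with ω h1 h2
  rw [h1, h2]

lemma aux_indep_integral_inner {X Y : Ω → V} (h : IndepFun X Y μ)
    (hX : MemLp X 2 μ) (hY : MemLp Y 2 μ) :
    ∫ ω, ⟪X ω, Y ω⟫ ∂μ = ⟪∫ ω, X ω ∂μ, ∫ ω, Y ω ∂μ⟫ := by
  have hXm : AEMeasurable X μ := hX.aestronglyMeasurable.aemeasurable
  have hYm : AEMeasurable Y μ := hY.aestronglyMeasurable.aemeasurable
  have hXi : Integrable X μ := hX.integrable one_le_two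
  have hYi : Integrable Y μ := hY.integrable one_le_two
  haveI : IsProbabilityMeasure (μ.map X) := Measure.isProbabilityMeasure_map hXm
  haveI : IsProbabilityMeasure (μ.map Y) := Measure.isProbabilityMeasure_map hYm
  have hmap := (indepFun_iff_map_prod_eq_prod_map_map hXm hYm).1 h
  have hiX : Integrable (fun x : V => x) (μ.map X) :=
    (integrable_map_measure continuous_id'.aestronglyMeasurable hXm).2 hXi
  have hiY : Integrable (fun x : V => x) (μ.map Y) :=
    (integrable_map_measure continuous_id'.aestronglyMeasurable hYm).2 hYi
  have hc : Continuous fun p : V × V => ⟪p.1, p.2⟫ := continuous_inner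
  have hbound : Integrable (fun p : V × V => ‖p.1‖ * ‖p.2‖) ((μ.map X).prod (μ.map Y)) :=
    Integrable.mul_prod hiX.norm hiY.norm
  have hint : Integrable (fun p : V × V => ⟪p.1, p.2⟫) ((μ.map X).prod (μ.map Y)) := by
    refine hbound.mono' hc.aestronglyMeasurable ?_
    filter_upwards with p
    simpa [Real.norm_eq_abs] using abs_real_inner_le_norm p.1 p.2
  calc ∫ ω, ⟪X ω, Y ω⟫ ∂μ
      = ∫ p : V × V, ⟪p.1, p.2⟫ ∂(μ.map fun ω => (X ω, Y ω)) :=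
        (integral_map (hXm.prodMk hYm) hc.aestronglyMeasurable).symm
    _ = ∫ p : V × V, ⟪p.1, p.2⟫ ∂((μ.map X).prod (μ.map Y)) := by rw [hmap]
    _ = ∫ x, ∫ y, ⟪x, y⟫ ∂(μ.map Y) ∂(μ.map X) := integral_prod _ hint
    _ = ∫ x, ⟪x, ∫ y, y ∂(μ.map Y)⟫ ∂(μ.map X) := by
        refine integral_congr_ae (Filter.Eventually.of_forall fun x => ?_)
        exact integral_inner hiY x
    _ = ∫ x, ⟪(∫ y, y ∂(μ.map Y)), x⟫ ∂(μ.map X) := by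
        refine integral_congr_ae (Filter.Eventually.of_forall fun x => ?_)
        exact real_inner_comm _ _
    _ = ⟪(∫ y, y ∂(μ.map Y)), ∫ x, x ∂(μ.map X)⟫ := integral_inner hiX _
    _ = ⟪∫ x, x ∂(μ.map X), ∫ y, y ∂(μ.map Y)⟫ := real_inner_comm _ _
    _ = ⟪∫ ω, X ω ∂μ, ∫ ω, Y ω ∂μ⟫ := by
        rw [show ∫ x, x ∂(μ.map X) = ∫ ω, X ω ∂μ from
            integral_map hXm continuous_id'.aestronglyMeasurable,
          show ∫ y, y ∂(μ.map Y) = ∫ ω, Y ω ∂μ from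
            integral_map hYm continuous_id'.aestronglyMeasurable]

lemma aux_var_sum (s : Finset ℕ) (f : ℕ → Ω → V) (hf : ∀ i ∈ s, MemLp (f i) 2 μ)
    (hind : ∀ i ∈ s, ∀ j ∈ s, i ≠ j → IndepFun (f i) (f j) μ) :
    ∫ ω, ‖(∑ i ∈ s, f i ω) - ∫ ω', ∑ i ∈ s, f i ω' ∂μ‖ ^ 2 ∂μ
      = ∑ i ∈ s, ∫ ω, ‖f i ω - ∫ ω', f i ω' ∂μ‖ ^ 2 ∂μ := by
  classical
  set c : ℕ → Ω → V := fun i ω => f i ω - ∫ ω', f i ω' ∂μ with hc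
  have hc2 : ∀ i ∈ s, MemLp (c i) 2 μ := fun i hi =>
    (hf i hi).sub (memLp_const _)
  have hcint : ∀ i ∈ s, ∫ ω, c i ω ∂μ = 0 := by
    intro i hi
    simp only [hc]
    rw [integral_sub ((hf i hi).integrable one_le_two) (integrable_const _)]
    simp
  have hcind : ∀ i ∈ s, ∀ j ∈ s, i ≠ j → IndepFun (c i) (c j) μ := by
    intro i hi j hj hij
    exact (hind i hi j hj hij).comp (measurable_id.sub measurable_const)
      (measurable_id.sub measurable_const)
  have hswap : ∫ ω', ∑ i ∈ s, f i ω' ∂μ = ∑ i ∈ s, ∫ ω', f i ω' ∂μ :=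
    integral_finset_sum s fun i hi => (hf i hi).integrable one_le_two
  have hpt : ∀ ω, (∑ i ∈ s, f i ω) - ∫ ω', ∑ i ∈ s, f i ω' ∂μ = ∑ i ∈ s, c i ω := by
    intro ω
    rw [hswap, ← Finset.sum_sub_distrib]
  calc ∫ ω, ‖(∑ i ∈ s, f i ω) - ∫ ω', ∑ i ∈ s, f i ω' ∂μ‖ ^ 2 ∂μ
      = ∫ ω, ∑ i ∈ s, ∑ j ∈ s, ⟪c i ω, c j ω⟫ ∂μ := by
        refine integral_congr_ae (Filter.Eventually.of_forall fun ω => ?_)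
        dsimp only
        rw [hpt ω, ← real_inner_self_eq_norm_sq, sum_inner]
        exact Finset.sum_congr rfl fun i _ => inner_sum s _ _
    _ = ∑ i ∈ s, ∑ j ∈ s, ∫ ω, ⟪c i ω, c j ω⟫ ∂μ := by
        rw [integral_finset_sum s fun i hi => integrable_finset_sum s fun j hj =>
          aux_integrable_inner (hc2 i hi) (hc2 j hj)]
        exact Finset.sum_congr rfl fun i hi =>
          integral_finset_sum s fun j hj => aux_integrable_inner (hc2 i hi) (hc2 j hj)
    _ = ∑ i ∈ s, ∫ ω, ‖c i ω - ∫ ω', c i ω' ∂μ‖ ^ 2 ∂μ := by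
        refine Finset.sum_congr rfl fun i hi => ?_
        rw [Finset.sum_eq_single_of_mem i hi]
        · rw [hcint i hi]
          refine integral_congr_ae (Filter.Eventually.of_forall fun ω => ?_)
          dsimp only
          rw [sub_zero, real_inner_self_eq_norm_sq]
        · intro j hj hji
          rw [aux_indep_integral_inner (hcind i hi j hj (Ne.symm hji)) (hc2 i hi) (hc2 j hj),
            hcint j hj, inner_zero_right]
    _ = ∑ i ∈ s, ∫ ω, ‖f i ω - ∫ ω', f i ω' ∂μ‖ ^ 2 ∂μ := by
        refine Finset.sum_congr rfl fun i hi => ?_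
        rw [hcint i hi]
        refine integral_congr_ae (Filter.Eventually.of_forall fun ω => ?_)
        dsimp only
        rw [sub_zero]

end Aux

/-- Unbiasedness and variance decomposition of the bootstrap multilevel Monte Carlo
estimator: `w i ℓ` is sample `i` of the level-`ℓ` approximation, the vectors
`(w i 0, …, w i L)` being i.i.d. copies of `(v 0, …, v L)` across `i`. -/
theorem stmt15 {Ω V : Type*} [MeasurableSpace Ω] (μ : Measure Ω) [IsProbabilityMeasure μ]
    [NormedAddCommGroup V] [InnerProductSpace ℝ V] [CompleteSpace V]
    [MeasurableSpace V] [BorelSpace V] [SecondCountableTopology V]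
    (L : ℕ) (v : ℕ → Ω → V) (w : ℕ → ℕ → Ω → V)
    (M : ℕ → ℕ)
    (hMdec : ∀ ℓ ≤ L, M (ℓ + 1) ≤ M ℓ) (hMend : M (L + 1) = 0) (hMpos : ∀ ℓ ≤ L, 1 ≤ M ℓ)
    (hv2 : ∀ ℓ, MemLp (v ℓ) 2 μ)
    (hwmeas : ∀ i, Measurable (fun ω => (fun ℓ : Fin (L + 1) => w i ℓ ω)))
    (hindep : iIndepFun
      (fun i ω => (fun ℓ : Fin (L + 1) => w i ℓ ω)) μ)
    (hid : ∀ i, IdentDistrib (fun ω => (fun ℓ : Fin (L + 1) => w i ℓ ω))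
      (fun ω => (fun ℓ : Fin (L + 1) => v ℓ ω)) μ μ) :
    (∫ ω, ∑ ℓ ∈ Finset.range (L + 1), (M ℓ : ℝ)⁻¹ •
        ∑ i ∈ Finset.range (M ℓ), (w i ℓ ω - (if ℓ = 0 then 0 else w i (ℓ - 1) ω)) ∂μ)
      = ∫ ω, v L ω ∂μ
    ∧ (∫ ω, ‖(∑ ℓ ∈ Finset.range (L + 1), (M ℓ : ℝ)⁻¹ •
          ∑ i ∈ Finset.range (M ℓ), (w i ℓ ω - (if ℓ = 0 then 0 else w i (ℓ - 1) ω))) -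
          (∫ ω', ∑ ℓ ∈ Finset.range (L + 1), (M ℓ : ℝ)⁻¹ •
          ∑ i ∈ Finset.range (M ℓ),
            (w i ℓ ω' - (if ℓ = 0 then 0 else w i (ℓ - 1) ω')) ∂μ)‖ ^ 2 ∂μ)
      = ∑ ℓ ∈ Finset.range (L + 1), ((M ℓ : ℝ) - (M (ℓ + 1) : ℝ)) *
          (∫ ω, ‖(∑ k ∈ Finset.range (ℓ + 1), (M k : ℝ)⁻¹ •
              (v k ω - (if k = 0 then 0 else v (k - 1) ω))) -
              (∫ ω', ∑ k ∈ Finset.range (ℓ + 1), (M k : ℝ)⁻¹ •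
              (v k ω' - (if k = 0 then 0 else v (k - 1) ω')) ∂μ)‖ ^ 2 ∂μ) := by
  classical
  -- monotonicity of M on [0, L+1]
  have hMmono : ∀ a b, a ≤ b → b ≤ L + 1 → M b ≤ M a := by
    intro a b hab hbL
    induction b with
    | zero => simp [Nat.le_zero.mp hab]
    | succ n ih =>
      rcases Nat.lt_or_ge a (n + 1) with h | h
      · exact le_trans (hMdec n (Nat.lt_succ_iff.mp hbL))
          (ih (Nat.lt_succ_iff.mp h) (le_trans (Nat.le_succ n) hbL))
      · have : a = n + 1 := le_antisymm hab h
        simp [this]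
  -- the level corrections
  set D : ℕ → ℕ → Ω → V :=
    fun i ℓ ω => w i ℓ ω - (if ℓ = 0 then 0 else w i (ℓ - 1) ω) with hD
  set Dv : ℕ → Ω → V :=
    fun ℓ ω => v ℓ ω - (if ℓ = 0 then 0 else v (ℓ - 1) ω) with hDv
  -- extension of finite tuples
  set ex : (Fin (L + 1) → V) → ℕ → V :=
    fun x k => if h : k < L + 1 then x ⟨k, h⟩ else 0 with hex
  have hexmeas : ∀ k, Measurable fun x : Fin (L + 1) → V => ex x k := by
    intro k
    simp only [hex]
    split
    · exact measurable_pi_apply _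
    · exact measurable_const
  set g : ℕ → (Fin (L + 1) → V) → V :=
    fun ℓ x => ex x ℓ - (if ℓ = 0 then 0 else ex x (ℓ - 1)) with hg
  have hgmeas : ∀ ℓ, Measurable (g ℓ) := by
    intro ℓ
    refine (hexmeas ℓ).sub ?_
    split
    · exact measurable_const
    · exact hexmeas _
  have hgw : ∀ i ℓ, ℓ ≤ L → (fun ω => g ℓ (fun k : Fin (L + 1) => w i k ω)) = D i ℓ := by
    intro i ℓ hℓ
    funext ω
    simp only [hg, hex, hD]
    rw [dif_pos (Nat.lt_succ_of_le hℓ)]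
    congr 1
    split
    · rfl
    · rw [dif_pos (Nat.lt_succ_of_le (le_trans (Nat.sub_le ℓ 1) hℓ))]
  have hgv : ∀ ℓ, ℓ ≤ L → (fun ω => g ℓ (fun k : Fin (L + 1) => v k ω)) = Dv ℓ := by
    intro ℓ hℓ
    funext ω
    simp only [hg, hex, hDv]
    rw [dif_pos (Nat.lt_succ_of_le hℓ)]
    congr 1
    split
    · rfl
    · rw [dif_pos (Nat.lt_succ_of_le (le_trans (Nat.sub_le ℓ 1) hℓ))]
  have hDid : ∀ i ℓ, ℓ ≤ L → IdentDistrib (D i ℓ) (Dv ℓ) μ μ := by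
    intro i ℓ hℓ
    have := (hid i).comp (hgmeas ℓ)
    rw [show (g ℓ ∘ fun ω => fun k : Fin (L + 1) => w i k ω)
        = fun ω => g ℓ (fun k : Fin (L + 1) => w i k ω) from rfl,
      show (g ℓ ∘ fun ω => fun k : Fin (L + 1) => v k ω)
        = fun ω => g ℓ (fun k : Fin (L + 1) => v k ω) from rfl,
      hgw i ℓ hℓ, hgv ℓ hℓ] at this
    exact this
  have hDv2 : ∀ ℓ, MemLp (Dv ℓ) 2 μ := by
    intro ℓ
    refine (hv2 ℓ).sub ?_
    split
    · exact memLp_const 0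
    · exact hv2 _
  have hD2 : ∀ i ℓ, ℓ ≤ L → MemLp (D i ℓ) 2 μ := fun i ℓ hℓ =>
    (hDid i ℓ hℓ).symm.memLp_snd (hDv2 ℓ)
  -- the per-sample contributions
  set B : ℕ → Ω → V :=
    fun i ω => ∑ ℓ ∈ Finset.range (L + 1), if i < M ℓ then (M ℓ : ℝ)⁻¹ • D i ℓ ω else 0
    with hB
  set Bv : ℕ → Ω → V :=
    fun i ω => ∑ ℓ ∈ Finset.range (L + 1), if i < M ℓ then (M ℓ : ℝ)⁻¹ • Dv ℓ ω else 0
    with hBv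
  set gB : ℕ → (Fin (L + 1) → V) → V :=
    fun i x => ∑ ℓ ∈ Finset.range (L + 1), if i < M ℓ then (M ℓ : ℝ)⁻¹ • g ℓ x else 0
    with hgB
  have hgBmeas : ∀ i, Measurable (gB i) := by
    intro i
    refine Finset.measurable_sum _ fun ℓ _ => ?_
    split
    · exact (hgmeas ℓ).const_smul _
    · exact measurable_const
  have hgBw : ∀ i, (fun ω => gB i (fun k : Fin (L + 1) => w i k ω)) = B i := by
    intro i
    funext ω
    simp only [hgB, hB]
    refine Finset.sum_congr rfl fun ℓ hℓ => ?_
    have hℓL : ℓ ≤ L := Nat.lt_succ_iff.mp (Finset.mem_range.mp hℓ)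
    split
    · rw [show g ℓ (fun k : Fin (L + 1) => w i k ω) = D i ℓ ω from congrFun (hgw i ℓ hℓL) ω]
    · rfl
  have hgBv : ∀ i, (fun ω => gB i (fun k : Fin (L + 1) => v k ω)) = Bv i := by
    intro i
    funext ω
    simp only [hgB, hBv]
    refine Finset.sum_congr rfl fun ℓ hℓ => ?_
    have hℓL : ℓ ≤ L := Nat.lt_succ_iff.mp (Finset.mem_range.mp hℓ)
    split
    · rw [show g ℓ (fun k : Fin (L + 1) => v k ω) = Dv ℓ ω from congrFun (hgv ℓ hℓL) ω]
    · rfl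
  have hBid : ∀ i, IdentDistrib (B i) (Bv i) μ μ := by
    intro i
    have := (hid i).comp (hgBmeas i)
    rw [show (gB i ∘ fun ω => fun k : Fin (L + 1) => w i k ω)
        = fun ω => gB i (fun k : Fin (L + 1) => w i k ω) from rfl,
      show (gB i ∘ fun ω => fun k : Fin (L + 1) => v k ω)
        = fun ω => gB i (fun k : Fin (L + 1) => v k ω) from rfl,
      hgBw i, hgBv i] at this
    exact this
  have hBv2 : ∀ i, MemLp (Bv i) 2 μ := by
    intro i
    have hterm : ∀ ℓ ∈ Finset.range (L + 1),
        MemLp (fun ω => if i < M ℓ then (M ℓ : ℝ)⁻¹ • Dv ℓ ω else 0) 2 μ := by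
      intro ℓ _
      split
      · exact (hDv2 ℓ).const_smul _
      · exact memLp_const 0
    exact memLp_finset_sum _ hterm
  have hB2 : ∀ i, MemLp (B i) 2 μ := fun i => (hBid i).symm.memLp_snd (hBv2 i)
  have hBindep : ∀ i j, i ≠ j → IndepFun (B i) (B j) μ := by
    intro i j hij
    have h1 := (hindep.comp gB hgBmeas).indepFun hij
    rw [show (gB i ∘ fun ω => fun k : Fin (L + 1) => w i k ω)
        = fun ω => gB i (fun k : Fin (L + 1) => w i k ω) from rfl,
      show (gB j ∘ fun ω => fun k : Fin (L + 1) => w j k ω)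
        = fun ω => gB j (fun k : Fin (L + 1) => w j k ω) from rfl,
      hgBw i, hgBw j] at h1
    exact h1
  -- rewriting the estimator as a sum over samples
  have hsub : ∀ ℓ, ℓ ≤ L → ∀ (f : ℕ → V),
      ∑ i ∈ Finset.range (M ℓ), f i
        = ∑ i ∈ Finset.range (M 0), if i < M ℓ then f i else 0 := by
    intro ℓ hℓ f
    rw [← Finset.sum_filter]
    congr 1
    ext i
    simp only [Finset.mem_filter, Finset.mem_range]
    constructor
    · intro h
      exact ⟨lt_of_lt_of_le h (hMmono 0 ℓ (Nat.zero_le ℓ) (le_trans hℓ (Nat.le_succ L))), h⟩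
    · exact fun h => h.2
  have hest : ∀ ω, (∑ ℓ ∈ Finset.range (L + 1), (M ℓ : ℝ)⁻¹ •
      ∑ i ∈ Finset.range (M ℓ), D i ℓ ω) = ∑ i ∈ Finset.range (M 0), B i ω := by
    intro ω
    have h1 : ∀ ℓ ∈ Finset.range (L + 1), (M ℓ : ℝ)⁻¹ • ∑ i ∈ Finset.range (M ℓ), D i ℓ ω
        = ∑ i ∈ Finset.range (M 0), if i < M ℓ then (M ℓ : ℝ)⁻¹ • D i ℓ ω else 0 := by
      intro ℓ hℓ
      rw [Finset.smul_sum, hsub ℓ (Nat.lt_succ_iff.mp (Finset.mem_range.mp hℓ))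
        (fun i => (M ℓ : ℝ)⁻¹ • D i ℓ ω)]
    rw [Finset.sum_congr rfl h1, Finset.sum_comm]
  -- partition of range (M 0) into blocks
  have hpart : ∀ (f : ℕ → ℝ), ∑ i ∈ Finset.range (M 0), f i
      = ∑ ℓ ∈ Finset.range (L + 1), ∑ i ∈ Finset.Ico (M (ℓ + 1)) (M ℓ), f i := by
    intro f
    have key : ∀ n, n ≤ L + 1 →
        ∑ ℓ ∈ Finset.range n, ∑ i ∈ Finset.Ico (M (ℓ + 1)) (M ℓ), f i
          = ∑ i ∈ Finset.Ico (M n) (M 0), f i := by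
      intro n hn
      induction n with
      | zero => simp
      | succ m ih =>
        rw [Finset.sum_range_succ, ih (le_trans (Nat.le_succ m) hn), add_comm]
        exact Finset.sum_Ico_consecutive f
          (hMdec m (Nat.lt_succ_iff.mp hn))
          (hMmono 0 m (Nat.zero_le m) (le_trans (Nat.le_succ m) hn))
    rw [key (L + 1) le_rfl, hMend, Finset.range_eq_Ico]
  -- identification of Bv i on each block
  set S : ℕ → Ω → V :=
    fun ℓ ω => ∑ k ∈ Finset.range (ℓ + 1), (M k : ℝ)⁻¹ • Dv k ω with hS
  have hBvS : ∀ ℓ, ℓ ≤ L → ∀ i, M (ℓ + 1) ≤ i → i < M ℓ → Bv i = S ℓ := by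
    intro ℓ hℓ i hi1 hi2
    funext ω
    simp only [hBv, hS]
    rw [← Finset.sum_filter]
    refine Finset.sum_congr ?_ fun k _ => rfl
    ext k
    simp only [Finset.mem_filter, Finset.mem_range]
    constructor
    · rintro ⟨hk1, hk2⟩
      by_contra hk
      have hk' : ℓ + 1 ≤ k := Nat.le_of_not_lt hk
      have : M k ≤ M (ℓ + 1) := hMmono (ℓ + 1) k hk' (Nat.le_of_lt hk1)
      omega
    · intro hk
      have hk' : k ≤ ℓ := Nat.lt_succ_iff.mp hk
      have h1 : M ℓ ≤ M k := hMmono k ℓ hk' (le_trans hℓ (Nat.le_succ L))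
      exact ⟨lt_of_lt_of_le hk (Nat.succ_le_succ hℓ), lt_of_lt_of_le hi2 h1⟩
  -- the "variance" functional
  set Vr : (Ω → V) → ℝ := fun f => ∫ ω, ‖f ω - ∫ ω', f ω' ∂μ‖ ^ 2 ∂μ with hVr
  have hVrid : ∀ i, Vr (B i) = Vr (Bv i) := by
    intro i
    have hm : ∫ ω, B i ω ∂μ = ∫ ω, Bv i ω ∂μ :=
      (hBid i).integral_eq
    simp only [hVr]
    rw [hm]
    have hmeas : Measurable fun x : V => ‖x - ∫ ω, Bv i ω ∂μ‖ ^ 2 :=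
      (((continuous_id.sub continuous_const).norm).pow 2).measurable
    exact ((hBid i).comp hmeas).integral_eq
  constructor
  · -- unbiasedness
    have hint : ∀ ℓ ∈ Finset.range (L + 1),
        Integrable (fun ω => (M ℓ : ℝ)⁻¹ • ∑ i ∈ Finset.range (M ℓ), D i ℓ ω) μ := by
      intro ℓ hℓ
      have hℓL : ℓ ≤ L := Nat.lt_succ_iff.mp (Finset.mem_range.mp hℓ)
      exact (integrable_finset_sum _ fun i _ =>
        (hD2 i ℓ hℓL).integrable one_le_two).smul _
    rw [integral_finset_sum _ hint]
    have h1 : ∀ ℓ ∈ Finset.range (L + 1),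
        ∫ ω, (M ℓ : ℝ)⁻¹ • ∑ i ∈ Finset.range (M ℓ), D i ℓ ω ∂μ
          = ∫ ω, Dv ℓ ω ∂μ := by
      intro ℓ hℓ
      have hℓL : ℓ ≤ L := Nat.lt_succ_iff.mp (Finset.mem_range.mp hℓ)
      rw [integral_smul, integral_finset_sum _ fun i _ =>
        (hD2 i ℓ hℓL).integrable one_le_two]
      have h2 : ∀ i ∈ Finset.range (M ℓ), ∫ ω, D i ℓ ω ∂μ = ∫ ω, Dv ℓ ω ∂μ :=
        fun i _ => (hDid i ℓ hℓL).integral_eq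
      have hM0 : (M ℓ : ℝ) ≠ 0 :=
        Nat.cast_ne_zero.mpr (Nat.one_le_iff_ne_zero.mp (hMpos ℓ hℓL))
      rw [Finset.sum_congr rfl h2, Finset.sum_const, Finset.card_range,
        ← Nat.cast_smul_eq_nsmul ℝ, smul_smul, inv_mul_cancel₀ hM0, one_smul]
    rw [Finset.sum_congr rfl h1,
      ← integral_finset_sum _ fun ℓ _ => (hDv2 ℓ).integrable one_le_two]
    refine integral_congr_ae (Filter.Eventually.of_forall fun ω => ?_)
    simp only [hDv]
    rw [Finset.sum_range_succ']
    have h3 : ∀ i ∈ Finset.range L,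
        (v (i + 1) ω - if i + 1 = 0 then 0 else v (i + 1 - 1) ω)
          = v (i + 1) ω - v i ω := by
      intro i _
      simp
    rw [Finset.sum_congr rfl h3, Finset.sum_range_sub (fun i => v i ω)]
    simp
  · -- variance decomposition
    have hestfun : (fun ω => ∑ ℓ ∈ Finset.range (L + 1), (M ℓ : ℝ)⁻¹ •
        ∑ i ∈ Finset.range (M ℓ), D i ℓ ω) = fun ω => ∑ i ∈ Finset.range (M 0), B i ω :=
      funext hest
    calc ∫ ω, ‖(∑ ℓ ∈ Finset.range (L + 1), (M ℓ : ℝ)⁻¹ •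
          ∑ i ∈ Finset.range (M ℓ), D i ℓ ω) -
          (∫ ω', ∑ ℓ ∈ Finset.range (L + 1), (M ℓ : ℝ)⁻¹ •
          ∑ i ∈ Finset.range (M ℓ), D i ℓ ω' ∂μ)‖ ^ 2 ∂μ
        = ∫ ω, ‖(∑ i ∈ Finset.range (M 0), B i ω) -
            (∫ ω', ∑ i ∈ Finset.range (M 0), B i ω' ∂μ)‖ ^ 2 ∂μ := by
          have e1 : (fun ω => ∑ ℓ ∈ Finset.range (L + 1), (M ℓ : ℝ)⁻¹ •
              ∑ i ∈ Finset.range (M ℓ), D i ℓ ω)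
              = fun ω => ∑ i ∈ Finset.range (M 0), B i ω := funext hest
          rw [show (∫ ω', ∑ ℓ ∈ Finset.range (L + 1), (M ℓ : ℝ)⁻¹ •
              ∑ i ∈ Finset.range (M ℓ), D i ℓ ω' ∂μ)
            = ∫ ω', ∑ i ∈ Finset.range (M 0), B i ω' ∂μ from by rw [e1]]
          refine integral_congr_ae (Filter.Eventually.of_forall fun ω => ?_)
          dsimp only
          rw [hest ω]
      _ = ∑ i ∈ Finset.range (M 0), Vr (B i) := by
          exact aux_var_sum _ B (fun i _ => hB2 i)
            (fun i _ j _ hij => hBindep i j hij)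
      _ = ∑ i ∈ Finset.range (M 0), Vr (Bv i) :=
          Finset.sum_congr rfl fun i _ => hVrid i
      _ = ∑ ℓ ∈ Finset.range (L + 1), ∑ i ∈ Finset.Ico (M (ℓ + 1)) (M ℓ), Vr (Bv i) :=
          hpart fun i => Vr (Bv i)
      _ = ∑ ℓ ∈ Finset.range (L + 1), ((M ℓ : ℝ) - (M (ℓ + 1) : ℝ)) * Vr (S ℓ) := by
          refine Finset.sum_congr rfl fun ℓ hℓ => ?_
          have hℓL : ℓ ≤ L := Nat.lt_succ_iff.mp (Finset.mem_range.mp hℓ)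
          have h4 : ∀ i ∈ Finset.Ico (M (ℓ + 1)) (M ℓ), Vr (Bv i) = Vr (S ℓ) := by
            intro i hi
            rw [hBvS ℓ hℓL i (Finset.mem_Ico.mp hi).1 (Finset.mem_Ico.mp hi).2]
          rw [Finset.sum_congr rfl h4, Finset.sum_const, Nat.card_Ico, nsmul_eq_mul,
            Nat.cast_sub (hMdec ℓ hℓL)]
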